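/- Under Foata's fundamental transformation mapping π to σ, every strong fixed point of π maps to a skew strong fixed point of σ, and conversely; in particular the number of strong fixed points of π equals the number of skew strong fixed points of σ. -/

import Mathlib

open Classical in
/-- The one-line word of Foata's fundamental transformation: write each cycle of `π`
with its smallest element first, sort the cycles in descending order of their first
elements, and erase the parentheses. -/
noncomputable def foataWord {n : ℕ} (π : Equiv.Perm (Fin n)) : List (Fin n) :=
  (((List.finRange n).filter (fun m => decide (∀ k : ℕ, m ≤ (π ^ k) m))).reverse).flatMap
    (fun m => (List.range (Function.minimalPeriod (⇑π) m)).map (fun k => (π ^ k) m))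

/-- Foata's fundamental transformation as a map on permutations. -/
noncomputable def foataPerm {n : ℕ} (π : Equiv.Perm (Fin n)) : Equiv.Perm (Fin n) :=
  if h : ∃ σ : Equiv.Perm (Fin n), List.ofFn ⇑σ = foataWord π then h.choose else 1

/-- `i` is a strong fixed point of `π`. -/
def IsStrongFixedPoint {n : ℕ} (π : Equiv.Perm (Fin n)) (i : Fin n) : Prop :=
  π i = i ∧ (∀ j, j < i → π j < π i) ∧ ∀ j, i < j → π i < π j

/-- `j` is a skew strong fixed point of `σ`. -/
def IsSkewStrongFixedPoint {n : ℕ} (σ : Equiv.Perm (Fin n)) (j : Fin n) : Prop :=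
  (∀ l, l < j → σ j < σ l) ∧ ∀ l, j < l → σ l < σ j

namespace FoataAux

open Function List

variable {n : ℕ}

/-- The block (cycle word) of `m`. -/
noncomputable def blk (π : Equiv.Perm (Fin n)) (m : Fin n) : List (Fin n) :=
  (List.range (Function.minimalPeriod (⇑π) m)).map (fun k => (π ^ k) m)

/-- `m` is the minimum of its cycle. -/
def IsCycMin (π : Equiv.Perm (Fin n)) (m : Fin n) : Prop := ∀ k : ℕ, m ≤ (π ^ k) m

open Classical in
noncomputable def mins (π : Equiv.Perm (Fin n)) : List (Fin n) :=
  ((List.finRange n).filter (fun m => decide (∀ k : ℕ, m ≤ (π ^ k) m))).reverse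

theorem word_eq (π : Equiv.Perm (Fin n)) : foataWord π = (mins π).flatMap (blk π) := rfl

theorem mem_mins {π : Equiv.Perm (Fin n)} {m : Fin n} : m ∈ mins π ↔ IsCycMin π m := by
  simp [mins, IsCycMin, List.mem_filter]

theorem mins_sorted (π : Equiv.Perm (Fin n)) : (mins π).Pairwise (· > ·) := by
  rw [mins, List.pairwise_reverse]
  exact List.Pairwise.filter _ (List.pairwise_lt_finRange n)

theorem nodup_mins (π : Equiv.Perm (Fin n)) : (mins π).Nodup :=
  (mins_sorted π).imp ne_of_gt

theorem period_pos (π : Equiv.Perm (Fin n)) (x : Fin n) : 0 < minimalPeriod (⇑π) x := by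
  apply Function.IsPeriodicPt.minimalPeriod_pos (orderOf_pos π)
  unfold Function.IsPeriodicPt
  rw [← Equiv.Perm.coe_pow, pow_orderOf_eq_one]; rfl

theorem pow_mod (π : Equiv.Perm (Fin n)) (x : Fin n) (k : ℕ) :
    (π ^ (k % minimalPeriod (⇑π) x)) x = (π ^ k) x := by
  simp only [Equiv.Perm.coe_pow]; exact Function.iterate_mod_minimalPeriod_eq

theorem mem_blk {π : Equiv.Perm (Fin n)} {m x : Fin n} :
    x ∈ blk π m ↔ ∃ k : ℕ, (π ^ k) m = x := by
  constructor
  · rintro h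
    simp only [blk, List.mem_map, List.mem_range] at h
    obtain ⟨k, -, rfl⟩ := h; exact ⟨k, rfl⟩
  · rintro ⟨k, rfl⟩
    simp only [blk, List.mem_map, List.mem_range]
    exact ⟨k % minimalPeriod (⇑π) m, Nat.mod_lt _ (period_pos π m), pow_mod π m k⟩

theorem nodup_blk (π : Equiv.Perm (Fin n)) (m : Fin n) : (blk π m).Nodup := by
  refine List.nodup_range.map_on ?_
  intro a ha b hb hab
  simp only [List.mem_range] at ha hb
  have := Function.iterate_injOn_Iio_minimalPeriod (f := ⇑π) (x := m) ha hb
  simp only [← Equiv.Perm.coe_pow] at this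
  exact this hab

theorem blk_length (π : Equiv.Perm (Fin n)) (m : Fin n) :
    (blk π m).length = minimalPeriod (⇑π) m := by simp [blk]

theorem blk_getElem (π : Equiv.Perm (Fin n)) (m : Fin n) {k : ℕ}
    (hk : k < minimalPeriod (⇑π) m) :
    (blk π m)[k]'(by rw [blk_length]; exact hk) = (π ^ k) m := by
  simp [blk]

theorem blk_closed {π : Equiv.Perm (Fin n)} {m x : Fin n} (h : x ∈ blk π m) :
    π x ∈ blk π m := by
  obtain ⟨k, rfl⟩ := mem_blk.1 h
  exact mem_blk.2 ⟨k + 1, by rw [pow_succ', Equiv.Perm.mul_apply]⟩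

theorem blk_trans {π : Equiv.Perm (Fin n)} {m x y : Fin n} (hx : x ∈ blk π m)
    (hy : y ∈ blk π x) : y ∈ blk π m := by
  obtain ⟨a, rfl⟩ := mem_blk.1 hx
  obtain ⟨b, rfl⟩ := mem_blk.1 hy
  exact mem_blk.2 ⟨b + a, by rw [pow_add, Equiv.Perm.mul_apply]⟩

theorem mem_blk_symm {π : Equiv.Perm (Fin n)} {m x : Fin n} (h : x ∈ blk π m) :
    m ∈ blk π x := by
  obtain ⟨k, rfl⟩ := mem_blk.1 h
  set T := minimalPeriod (⇑π) m with hT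
  refine mem_blk.2 ⟨T - k % T, ?_⟩
  rw [← pow_mod π m k, ← Equiv.Perm.mul_apply, ← pow_add,
    Nat.sub_add_cancel (le_of_lt (Nat.mod_lt _ (period_pos π m)))]
  show (π ^ T) m = m
  have h2 : Function.IsPeriodicPt (⇑π) T m := Function.isPeriodicPt_minimalPeriod (⇑π) m
  rw [Equiv.Perm.coe_pow]; exact h2

theorem cycMin_le {π : Equiv.Perm (Fin n)} {m x : Fin n} (hm : IsCycMin π m)
    (hx : x ∈ blk π m) : m ≤ x := by
  obtain ⟨k, rfl⟩ := mem_blk.1 hx; exact hm k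

theorem cycMin_eq {π : Equiv.Perm (Fin n)} {m₁ m₂ x : Fin n} (h1 : IsCycMin π m₁)
    (h2 : IsCycMin π m₂) (hx1 : x ∈ blk π m₁) (hx2 : x ∈ blk π m₂) : m₁ = m₂ := by
  have h21 : m₂ ∈ blk π m₁ := blk_trans hx1 (mem_blk_symm hx2)
  have h12 : m₁ ∈ blk π m₂ := blk_trans hx2 (mem_blk_symm hx1)
  exact le_antisymm (cycMin_le h1 h21) (cycMin_le h2 h12)

theorem exists_cycMin (π : Equiv.Perm (Fin n)) (x : Fin n) :
    ∃ m, IsCycMin π m ∧ x ∈ blk π m := by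
  classical
  have hxx : x ∈ (blk π x).toFinset := by
    simp only [List.mem_toFinset]; exact mem_blk.2 ⟨0, rfl⟩
  obtain ⟨m, hmmem, hmin⟩ := Finset.exists_min_image (blk π x).toFinset id ⟨x, hxx⟩
  simp only [List.mem_toFinset] at hmmem
  refine ⟨m, ?_, mem_blk_symm hmmem⟩
  intro k
  have : (π ^ k) m ∈ blk π x := blk_trans hmmem (mem_blk.2 ⟨k, rfl⟩)
  exact hmin _ (List.mem_toFinset.2 this)

theorem blk_fixed {π : Equiv.Perm (Fin n)} {m : Fin n} (h : π m = m) : blk π m = [m] := by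
  have : minimalPeriod (⇑π) m = 1 := Function.minimalPeriod_eq_one_iff_isFixedPt.2 h
  rw [blk, this]
  simp [List.range_succ]

theorem word_nodup (π : Equiv.Perm (Fin n)) : (foataWord π).Nodup := by
  rw [word_eq, List.nodup_flatMap]
  refine ⟨fun m _ => nodup_blk π m, ?_⟩
  refine List.Pairwise.imp_of_mem ?_ (nodup_mins π)
  intro a b ha hb hab
  rw [Function.onFun, List.disjoint_left]
  intro x hxa hxb
  exact hab (cycMin_eq (mem_mins.1 ha) (mem_mins.1 hb) hxa hxb)

theorem mem_word (π : Equiv.Perm (Fin n)) (x : Fin n) : x ∈ foataWord π := by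
  obtain ⟨m, hm, hx⟩ := exists_cycMin π x
  rw [word_eq, List.mem_flatMap]
  exact ⟨m, mem_mins.2 hm, hx⟩

theorem word_length (π : Equiv.Perm (Fin n)) : (foataWord π).length = n := by
  classical
  have h1 : (foataWord π).toFinset = Finset.univ :=
    Finset.eq_univ_iff_forall.2 fun x => List.mem_toFinset.2 (mem_word π x)
  have := List.toFinset_card_of_nodup (word_nodup π)
  rw [h1] at this
  simpa using this.symm

theorem exists_sigma (π : Equiv.Perm (Fin n)) :
    ∃ σ : Equiv.Perm (Fin n), List.ofFn ⇑σ = foataWord π := by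
  classical
  set w := foataWord π with hw
  have hlen : w.length = n := word_length π
  let f : Fin n → Fin n := fun j => w.get (Fin.cast hlen.symm j)
  have hinj : Function.Injective f := by
    intro a b hab
    have := List.nodup_iff_injective_get.1 (word_nodup π) hab
    simpa [Fin.ext_iff] using this
  refine ⟨Equiv.ofBijective f (Finite.injective_iff_bijective.1 hinj), ?_⟩
  apply List.ext_getElem (by simp [hlen])
  intro i h1 h2
  simp [Equiv.ofBijective, f, List.getElem_ofFn]

theorem sigma_apply {π σ : Equiv.Perm (Fin n)} (hσ : List.ofFn ⇑σ = foataWord π)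
    {j : ℕ} (hj : j < n) :
    σ ⟨j, hj⟩ = (foataWord π)[j]'(by rw [word_length]; exact hj) := by
  have h1 := List.getElem_of_eq hσ (i := j) (by simpa using hj)
  rw [← h1, List.getElem_ofFn]

theorem decomp {π : Equiv.Perm (Fin n)} {v : Fin n} (hv : IsCycMin π v) :
    ∃ P Q : List (Fin n), (∀ m ∈ P, v < m) ∧ (∀ m ∈ Q, m < v) ∧
      (∀ m ∈ P, IsCycMin π m) ∧ (∀ m ∈ Q, IsCycMin π m) ∧
      foataWord π = P.flatMap (blk π) ++ (blk π v ++ Q.flatMap (blk π)) := by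
  have hvm : v ∈ mins π := mem_mins.2 hv
  obtain ⟨P, Q, hPQ⟩ := List.append_of_mem hvm
  have hpair := mins_sorted π
  rw [hPQ] at hpair
  have h1 := List.pairwise_append.1 hpair
  refine ⟨P, Q, ?_, ?_, ?_, ?_, ?_⟩
  · intro m hm; exact h1.2.2 m hm v List.mem_cons_self
  · intro m hm; exact (List.pairwise_cons.1 h1.2.1).1 m hm
  · intro m hm; exact mem_mins.1 (hPQ ▸ (List.mem_append_left _ hm))
  · intro m hm
    exact mem_mins.1 (hPQ ▸ (List.mem_append_right _ (List.mem_cons_of_mem _ hm)))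
  · rw [word_eq, hPQ, List.flatMap_append, List.flatMap_cons]

/-- Positional facts attached to a split of the Foata word. -/
theorem split_pos {π σ : Equiv.Perm (Fin n)} (hσ : List.ofFn ⇑σ = foataWord π)
    {A B : List (Fin n)} {v : Fin n} (hw : foataWord π = A ++ v :: B) :
    ∃ j : Fin n, (j : ℕ) = A.length ∧ σ j = v ∧
      (∀ l, l < j → σ l ∈ A) ∧ (∀ l, j < l → σ l ∈ B) ∧
      (∀ x ∈ A, ∃ l, l < j ∧ σ l = x) ∧ (∀ x ∈ B, ∃ l, j < l ∧ σ l = x) := by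
  have hlen : A.length + (B.length + 1) = n := by
    have h0 := word_length π
    rw [hw] at h0
    simpa [Nat.add_comm, Nat.add_assoc, Nat.add_left_comm] using h0
  have hw2 : foataWord π = (A ++ [v]) ++ B := by rw [hw]; simp
  have hjn : A.length < n := by omega
  refine ⟨⟨A.length, hjn⟩, rfl, ?_, ?_, ?_, ?_, ?_⟩
  · rw [sigma_apply hσ hjn]
    have : (foataWord π)[A.length]'(by rw [word_length]; exact hjn) =
        (A ++ v :: B)[A.length]'(by simp only [List.length_append, List.length_cons]; omega) := by
      congr 1 <;> rw [hw]
    rw [this, List.getElem_append_right (le_refl _)]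
    simp
  · rintro ⟨l, hl⟩ hlj
    have hlj' : l < A.length := hlj
    rw [sigma_apply hσ hl]
    have : (foataWord π)[l]'(by rw [word_length]; exact hl) =
        (A ++ v :: B)[l]'(by simp only [List.length_append, List.length_cons]; omega) := by congr 1 <;> rw [hw]
    rw [this, List.getElem_append_left hlj']
    exact List.getElem_mem _
  · rintro ⟨l, hl⟩ hlj
    have hlj' : A.length < l := hlj
    rw [sigma_apply hσ hl]
    have : (foataWord π)[l]'(by rw [word_length]; exact hl) =
        ((A ++ [v]) ++ B)[l]'(by simp only [List.length_append, List.length_cons, List.length_singleton]; omega) := by congr 1 <;> rw [hw2]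
    rw [this, List.getElem_append_right (by simp; omega)]
    exact List.getElem_mem _
  · intro x hx
    obtain ⟨p, hp, hpx⟩ := List.mem_iff_getElem.1 hx
    refine ⟨⟨p, by omega⟩, ?_, ?_⟩
    · exact hp
    · rw [sigma_apply hσ (by omega : p < n)]
      have : (foataWord π)[p]'(by rw [word_length]; omega) =
          (A ++ v :: B)[p]'(by simp only [List.length_append, List.length_cons]; omega) := by congr 1 <;> rw [hw]
      rw [this, List.getElem_append_left hp, hpx]
  · intro x hx
    obtain ⟨p, hp, hpx⟩ := List.mem_iff_getElem.1 hx
    refine ⟨⟨A.length + 1 + p, by omega⟩, ?_, ?_⟩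
    · show A.length < A.length + 1 + p; omega
    · rw [sigma_apply hσ (by omega : A.length + 1 + p < n)]
      have : (foataWord π)[A.length + 1 + p]'(by rw [word_length]; omega) =
          ((A ++ [v]) ++ B)[A.length + 1 + p]'(by simp only [List.length_append, List.length_cons, List.length_singleton]; omega) := by
        congr 1 <;> rw [hw2]
      rw [this, List.getElem_append_right (by simp)]
      have : A.length + 1 + p - (A ++ [v]).length = p := by simp
      simp only [this]
      exact hpx

theorem strong_side {π : Equiv.Perm (Fin n)} {i : Fin n} (hs : IsStrongFixedPoint π i)
    (k : ℕ) (m : Fin n) : (i < m → i < (π ^ k) m) ∧ (m < i → (π ^ k) m < i) := by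
  obtain ⟨hfix, hlt, hgt⟩ := hs
  induction k with
  | zero => simp
  | succ k ih =>
    constructor
    · intro h
      have h1 := ih.1 h
      have h2 := hgt _ h1
      rw [hfix] at h2
      rw [pow_succ', Equiv.Perm.mul_apply]
      exact h2
    · intro h
      have h1 := ih.2 h
      have h2 := hlt _ h1
      rw [hfix] at h2
      rw [pow_succ', Equiv.Perm.mul_apply]
      exact h2

theorem strong_cycMin {π : Equiv.Perm (Fin n)} {i : Fin n} (hfix : π i = i) :
    IsCycMin π i := by
  intro k
  have : (π ^ k) i = i := by
    induction k with
    | zero => simp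
    | succ k ih => rw [pow_succ', Equiv.Perm.mul_apply, ih, hfix]
  rw [this]

end FoataAux

open FoataAux in
/-- Under Foata's fundamental transformation `π ↦ σ`, strong fixed points of `π`
correspond to skew strong fixed points of `σ`; in particular their numbers agree. -/
theorem foata_strong_fixed_points {n : ℕ} (π σ : Equiv.Perm (Fin n))
    (h : σ = foataPerm π) :
    (∀ i : Fin n, IsStrongFixedPoint π i →
        ∃ j : Fin n, σ j = π i ∧ IsSkewStrongFixedPoint σ j) ∧
    (∀ j : Fin n, IsSkewStrongFixedPoint σ j →
        ∃ i : Fin n, IsStrongFixedPoint π i ∧ π i = σ j) ∧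
    Nat.card {i : Fin n // IsStrongFixedPoint π i} =
      Nat.card {j : Fin n // IsSkewStrongFixedPoint σ j} := by
  have hex : ∃ σ : Equiv.Perm (Fin n), List.ofFn ⇑σ = foataWord π := exists_sigma π
  have hσ : List.ofFn ⇑σ = foataWord π := by
    rw [h, foataPerm, dif_pos hex]
    exact hex.choose_spec
  clear h
  -- Part 1
  have part1 : ∀ i : Fin n, IsStrongFixedPoint π i →
      ∃ j : Fin n, σ j = π i ∧ IsSkewStrongFixedPoint σ j := by
    intro i hi
    have hfix : π i = i := hi.1
    obtain ⟨P, Q, hP, hQ, hPm, hQm, hword⟩ := decomp (strong_cycMin hfix)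
    rw [blk_fixed hfix] at hword
    have hw : foataWord π = P.flatMap (blk π) ++ i :: Q.flatMap (blk π) := by
      rw [hword]; rfl
    obtain ⟨j, hjlen, hjv, hmemA, hmemB, -, -⟩ := split_pos hσ hw
    refine ⟨j, by rw [hjv, hfix], ?_, ?_⟩
    · intro l hl
      have hA := hmemA l hl
      obtain ⟨m, hmP, hmb⟩ := List.mem_flatMap.1 hA
      obtain ⟨k, hk⟩ := mem_blk.1 hmb
      rw [hjv, ← hk]
      exact (strong_side hi k m).1 (hP m hmP)
    · intro l hl
      have hB := hmemB l hl
      obtain ⟨m, hmQ, hmb⟩ := List.mem_flatMap.1 hB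
      obtain ⟨k, hk⟩ := mem_blk.1 hmb
      rw [hjv, ← hk]
      exact (strong_side hi k m).2 (hQ m hmQ)
  -- Part 2
  have part2 : ∀ j : Fin n, IsSkewStrongFixedPoint σ j →
      ∃ i : Fin n, IsStrongFixedPoint π i ∧ π i = σ j := by
    intro j hsk
    set v := σ j with hv
    obtain ⟨m, hm, hvb⟩ := exists_cycMin π v
    obtain ⟨P, Q, hP, hQ, hPm, hQm, hword⟩ := decomp hm
    set A := P.flatMap (blk π) with hA
    set T := Function.minimalPeriod (⇑π) m with hT
    have hlen : A.length + T + (Q.flatMap (blk π)).length = n := by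
      have h0 := word_length π
      rw [hword] at h0
      simp only [List.length_append, blk_length] at h0
      omega
    obtain ⟨k, hk, hbk⟩ := List.mem_iff_getElem.1 hvb
    rw [blk_length] at hk
    -- position of the k-th element of the block of m
    have hpos : ∀ t : ℕ, (ht : t < T) →
        σ ⟨A.length + t, by omega⟩ = (π ^ t) m := by
      intro t ht
      rw [sigma_apply hσ (by omega : A.length + t < n)]
      have h1 : (foataWord π)[A.length + t]'(by rw [word_length]; omega) =
          (A ++ (blk π m ++ Q.flatMap (blk π)))[A.length + t]'(by
            simp only [List.length_append, blk_length]; omega) := by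
        congr 1 <;> rw [hword]
      rw [h1, List.getElem_append_right (by omega : A.length ≤ A.length + t)]
      have h2 : A.length + t - A.length = t := by omega
      simp only [h2]
      rw [List.getElem_append_left (by rw [blk_length]; exact ht)]
      exact blk_getElem π m ht
    have hjk : (j : ℕ) = A.length + k := by
      have := hpos k hk
      rw [blk_getElem π m hk] at hbk
      rw [hbk, hv] at this
      have h3 := σ.injective this
      rw [← h3]
    have hk0 : k = 0 := by
      by_contra hk0
      have hlt : (⟨A.length + 0, by omega⟩ : Fin n) < j := by
        simp only [Fin.lt_def, hjk]; omega
      have := hsk.1 _ hlt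
      rw [hpos 0 (by omega)] at this
      simp only [pow_zero, Equiv.Perm.coe_one, id_eq] at this
      exact absurd (cycMin_le hm hvb) (not_le.2 this)
    have hvm : v = m := by
      rw [blk_getElem π m hk] at hbk
      rw [hk0] at hbk
      simpa using hbk.symm
    have hjA : (j : ℕ) = A.length := by omega
    have hfix : π v = v := by
      by_contra hne
      have hT1 : T ≠ 1 := by
        intro h1
        have : Function.IsFixedPt (⇑π) m := Function.minimalPeriod_eq_one_iff_isFixedPt.1 h1
        rw [← hvm] at this
        exact hne this
      have hT2 : 2 ≤ T := by
        have := period_pos π m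
        omega
      have hlt : j < (⟨A.length + 1, by omega⟩ : Fin n) := by
        simp only [Fin.lt_def, hjA]; omega
      have := hsk.2 _ hlt
      rw [hpos 1 (by omega)] at this
      simp only [pow_one] at this
      rw [← hvm] at this
      exact absurd (hm 1) (by rw [← hvm] at *; exact not_le.2 this)
    -- now v is a cycle minimum and fixed point; establish strong fixed point
    have hvcyc : IsCycMin π v := hvm ▸ hm
    have hwv : foataWord π = A ++ v :: Q.flatMap (blk π) := by
      rw [hword, ← hvm] at *
      rw [blk_fixed hfix]
      rfl
    obtain ⟨j', hj'len, hj'v, hmemA, hmemB, hposA, hposB⟩ := split_pos hσ hwv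
    have hjj' : j' = j := σ.injective (by rw [hj'v, hv])
    rw [hjj'] at hmemA hmemB hposA hposB
    have hsideB : ∀ x : Fin n, x < v → π x < v := by
      intro x hx
      have hxw : x ∈ foataWord π := mem_word π x
      rw [hwv] at hxw
      rcases List.mem_append.1 hxw with hxA | hxB
      · obtain ⟨l, hl, hle⟩ := hposA x hxA
        have := hsk.1 l hl
        rw [hle, ← hv] at this
        exact absurd hx (not_lt.2 (le_of_lt this))
      · rcases List.mem_cons.1 hxB with hxv | hxB'
        · exact absurd hxv (ne_of_lt hx)
        · obtain ⟨m', hm'Q, hm'b⟩ := List.mem_flatMap.1 hxB'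
          have hπx : π x ∈ Q.flatMap (blk π) :=
            List.mem_flatMap.2 ⟨m', hm'Q, blk_closed hm'b⟩
          obtain ⟨l, hl, hle⟩ := hposB _ hπx
          have := hsk.2 l hl
          rw [hle, ← hv] at this
          exact this
    have hsideA : ∀ x : Fin n, v < x → v < π x := by
      intro x hx
      have hxw : x ∈ foataWord π := mem_word π x
      rw [hwv] at hxw
      rcases List.mem_append.1 hxw with hxA | hxB
      · obtain ⟨m', hm'P, hm'b⟩ := List.mem_flatMap.1 hxA
        have hπx : π x ∈ A := by
          rw [hA]
          exact List.mem_flatMap.2 ⟨m', hm'P, blk_closed hm'b⟩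
        obtain ⟨l, hl, hle⟩ := hposA _ hπx
        have := hsk.1 l hl
        rw [hle, ← hv] at this
        exact this
      · rcases List.mem_cons.1 hxB with hxv | hxB'
        · exact absurd hxv (ne_of_gt hx)
        · obtain ⟨l, hl, hle⟩ := hposB x hxB'
          have := hsk.2 l hl
          rw [hle, ← hv] at this
          exact absurd hx (not_lt.2 (le_of_lt this))
    refine ⟨v, ⟨hfix, ?_, ?_⟩, by rw [hfix, hv]⟩
    · intro x hx
      rw [hfix]
      exact hsideB x hx
    · intro x hx
      rw [hfix]
      exact hsideA x hx
  refine ⟨part1, part2, ?_⟩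
  -- cardinality via an explicit equivalence
  have htoskew : ∀ i : Fin n, IsStrongFixedPoint π i → IsSkewStrongFixedPoint σ (σ⁻¹ i) := by
    intro i hi
    obtain ⟨j, hj1, hj2⟩ := part1 i hi
    have : j = σ⁻¹ i := by
      rw [hi.1] at hj1
      rw [← hj1]
      simp
    rwa [← this]
  have htostrong : ∀ j : Fin n, IsSkewStrongFixedPoint σ j → IsStrongFixedPoint π (σ j) := by
    intro j hj
    obtain ⟨i, hi1, hi2⟩ := part2 j hj
    have : i = σ j := by rw [← hi2, hi1.1]
    rwa [← this]
  refine Nat.card_congr ⟨fun a => ⟨σ⁻¹ a.1, htoskew a.1 a.2⟩,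
    fun b => ⟨σ b.1, htostrong b.1 b.2⟩, ?_, ?_⟩
  · intro a; apply Subtype.ext; simp
  · intro b; apply Subtype.ext; simp
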